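/- Let |ψ⟩ = (1/√2)(√(1−ε)|00⟩+√ε|11⟩)|0⟩ + (1/√2)(√ε|00⟩+√(1−ε)|11⟩)|1⟩ on ℂ²_C ⊗ ℂ²_P ⊗ ℂ²_{P'}, and let E_{0|0} = I_P ⊗ |0⟩⟨0|_{P'}. Then for every unitary U acting on the provider's systems P, P' together with appended ancillae |0̂⟩, and every unit vector |A⟩ on the provider's side, |⟨A|⟨00| U ((I_C⊗E_{0|0})|ψ⟩ ⊗ |0̂⟩) /‖(I_C⊗E_{0|0})|ψ⟩‖ |² ≤ 1 − ε; hence the trace distance to the target (1/√2)|A⟩|00⟩ after measurement is at least √ε for all isometries. -/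

import Mathlib

open Matrix Kronecker
open scoped ComplexOrder

/-- The Schatten 1-norm (trace norm) of a complex matrix: `tr √(AᴴA)`. -/
noncomputable def traceNorm {n : Type*} [Fintype n] [DecidableEq n]
    (A : Matrix n n ℂ) : ℝ :=
  ((Matrix.posSemidef_conjTranspose_mul_self A).1.eigenvectorUnitary.1 *
    Matrix.diagonal (((↑) : ℝ → ℂ) ∘ (√·) ∘ (Matrix.posSemidef_conjTranspose_mul_self A).1.eigenvalues) *
    (star (Matrix.posSemidef_conjTranspose_mul_self A).1.eigenvectorUnitary : Matrix n n ℂ)).trace.re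

/-- Package a plain function as a vector of the corresponding Euclidean space. -/
noncomputable def toEuc {ι : Type*} (f : ι → ℂ) : EuclideanSpace ℂ ι :=
  (WithLp.equiv 2 (ι → ℂ)).symm f

/-- Partial trace over the second tensor factor. -/
noncomputable def ptrR {m p : Type*} [Fintype p] (M : Matrix (m × p) (m × p) ℂ) :
    Matrix m m ℂ :=
  Matrix.of fun i j => ∑ y, M (i, y) (j, y)

/-- Pauli-Z matrix. -/
noncomputable def tauz : Matrix (Fin 2) (Fin 2) ℂ := !![1, 0; 0, -1]

/-- Pauli-X matrix. -/
noncomputable def taux : Matrix (Fin 2) (Fin 2) ℂ := !![0, 1; 1, 0]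

open scoped MatrixOrder in
lemma traceNorm_eq_cfc {n : Type*} [Fintype n] [DecidableEq n] (A : Matrix n n ℂ) :
    traceNorm A = (CFC.sqrt (Aᴴ * A)).trace.re := by
  have hA := Matrix.posSemidef_conjTranspose_mul_self A
  rw [CFC.sqrt_eq_cfc, cfc_nnreal_eq_real _ (Aᴴ * A) hA.nonneg, hA.1.cfc_eq]
  have key : (fun x : ℝ => √(max x 0)) = fun x => √x := by
    funext x
    rcases le_total x 0 with h | h
    · simp [h, Real.sqrt_eq_zero'.mpr h]
    · simp [h]
  simp only [traceNorm, IsHermitian.cfc, Unitary.conjStarAlgAut_apply, Real.coe_sqrt,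
    Real.coe_toNNReal', key]
  rfl

open scoped MatrixOrder in
lemma traceNorm_nonneg {n : Type*} [Fintype n] [DecidableEq n] (A : Matrix n n ℂ) :
    0 ≤ traceNorm A := by
  rw [traceNorm_eq_cfc]
  exact (Complex.le_def.mp (CFC.sqrt_nonneg (Aᴴ * A)).posSemidef.trace_nonneg).1

lemma toEuc_apply {ι : Type*} (f : ι → ℂ) (i : ι) : toEuc f i = f i := rfl

lemma vmv_mul {n : Type*} [Fintype n] (a b c d : n → ℂ) :
    vecMulVec a b * vecMulVec c d = (b ⬝ᵥ c) • vecMulVec a d := by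
  ext i j
  simp [Matrix.mul_apply, vecMulVec_apply, dotProduct, Finset.sum_mul, Finset.mul_sum]
  congr 1; ext k; ring

lemma sum_conj_mul_self {ι : Type*} [Fintype ι] (x : EuclideanSpace ℂ ι) :
    ∑ i, (starRingEnd ℂ) (x i) * x i = ((‖x‖ : ℂ))^2 := by
  rw [show ∑ i, (starRingEnd ℂ) (x i) * x i = (inner ℂ x x : ℂ) by
    rw [PiLp.inner_apply]; simp only [RCLike.inner_apply, mul_comm]]
  exact inner_self_eq_norm_sq_to_K x

lemma psd_smul {n : Type*} [Fintype n] {M : Matrix n n ℂ} (hM : M.PosSemidef) {c : ℝ}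
    (hc : 0 ≤ c) : ((c : ℂ) • M).PosSemidef := by
  refine PosSemidef.of_dotProduct_mulVec_nonneg ?_ ?_
  · rw [Matrix.IsHermitian, conjTranspose_smul, hM.1]
    congr 1
    simp
  · intro x
    rw [smul_mulVec, dotProduct_smul]
    exact smul_nonneg (by positivity) (hM.dotProduct_mulVec_nonneg x)

lemma psd_trace_re_nonneg {n : Type*} [Fintype n] [DecidableEq n] {M : Matrix n n ℂ}
    (hM : M.PosSemidef) : 0 ≤ M.trace.re := by
  rw [Matrix.trace]
  have h : ∀ i, 0 ≤ (M i i).re := by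
    intro i
    have := hM.dotProduct_mulVec_nonneg (Pi.single i 1)
    have h2 := (Complex.le_def.mp this).1
    simpa [dotProduct, mulVec, Pi.single_apply] using h2
  simpa [Matrix.diag] using Finset.sum_nonneg (fun i (_ : i ∈ Finset.univ) => h i)

open scoped MatrixOrder in
/-- Main matrix computation: the trace norm of `2vv† − TT†` equals `2√(1−2|⟨T,v⟩|²)`
when `‖v‖² = 1/2`, `‖T‖ = 1`. -/
lemma part2_aux {n : Type*} [Fintype n] [DecidableEq n] (v T : n → ℂ) (s : ℂ)
    (key1 : ∑ p, star (v p) * v p = (1/2:ℂ))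
    (key2 : ∑ p, star (T p) * T p = 1)
    (hs : s = ∑ p, star (T p) * v p)
    (f : ℝ) (hf : (f:ℂ) = s * (starRingEnd ℂ) s) (hfle : 2*f ≤ 1)
    (hlam_pos : (0:ℝ) < Real.sqrt (1 - 2*f)) :
    traceNorm ((2:ℂ) • vecMulVec v (fun p => star (v p)) - vecMulVec T (fun p => star (T p)))
      = 2 * Real.sqrt (1 - 2*f) := by
  set lam := Real.sqrt (1 - 2*f) with hlam_def
  have hlam2 : lam^2 = 1 - 2*f := Real.sq_sqrt (by nlinarith)
  set sv : n → ℂ := fun p => star (v p) with hsv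
  set sT : n → ℂ := fun p => star (T p) with hsT
  set P := vecMulVec v sv with hP
  set Q := vecMulVec T sT with hQ
  set R := vecMulVec v sT with hR
  set R' := vecMulVec T sv with hR'
  set M := (2:ℂ) • P - Q with hM
  -- dot products
  have d1 : sv ⬝ᵥ v = (1/2 : ℂ) := key1
  have d2 : sT ⬝ᵥ T = 1 := key2
  have d3 : sT ⬝ᵥ v = s := hs.symm
  have d4 : sv ⬝ᵥ T = (starRingEnd ℂ) s := by
    rw [hs, map_sum, dotProduct]
    congr 1; ext p
    simp only [hsv]
    rw [_root_.map_mul]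
    simp only [Complex.star_def, Complex.conj_conj]
    ring
  -- products
  have hPP : P * P = (1/2 : ℂ) • P := by rw [hP, vmv_mul, d1]
  have hQQ : Q * Q = Q := by rw [hQ, vmv_mul, d2, one_smul]
  have hPQ : P * Q = ((starRingEnd ℂ) s) • R := by rw [hP, hQ, vmv_mul, d4, hR]
  have hQP : Q * P = s • R' := by rw [hQ, hP, vmv_mul, d3, hR']
  have hRP : R * P = s • P := by rw [hR, hP, vmv_mul, d3]
  have hRQ : R * Q = R := by rw [hR, hQ, vmv_mul, d2, one_smul]
  have hR'P : R' * P = (1/2 : ℂ) • R' := by rw [hR', hP, vmv_mul, d1]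
  have hR'Q : R' * Q = ((starRingEnd ℂ) s) • Q := by rw [hR', hQ, vmv_mul, d4]
  have hM2 : M * M = (2:ℂ) • P + Q - ((2 * (starRingEnd ℂ) s) • R + (2 * s) • R') := by
    rw [hM]
    simp only [sub_mul, mul_sub, Matrix.smul_mul, Matrix.mul_smul, hPP, hQQ, hPQ, hQP, smul_smul]
    module
  have hM3 : (M * M) * M = ((1:ℂ) - 2*(s * (starRingEnd ℂ) s)) • M := by
    rw [hM2, hM]
    simp only [sub_mul, add_mul, mul_sub, Matrix.smul_mul, Matrix.mul_smul,
      hPP, hQQ, hPQ, hQP, hRP, hRQ, hR'P, hR'Q, smul_smul]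
    module
  -- Hermitian
  have hMh : Mᴴ = M := by
    rw [hM, hP, hQ]
    ext i j
    simp only [conjTranspose_apply, Matrix.sub_apply, Matrix.smul_apply, vecMulVec_apply,
      hsv, hsT, smul_eq_mul, star_sub, star_mul', star_star, star_ofNat]
    ring
  have hMM_psd : (M * M).PosSemidef := by
    have h := Matrix.posSemidef_conjTranspose_mul_self M
    rwa [hMh] at h
  -- the candidate square root
  set B : Matrix n n ℂ := ((lam⁻¹ : ℝ) : ℂ) • (M * M) with hB
  have hB_psd : B.PosSemidef := psd_smul hMM_psd (inv_nonneg.mpr hlam_pos.le)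
  have hscal : ((1:ℂ) - 2*(s * (starRingEnd ℂ) s)) = (((1 - 2*f : ℝ)) : ℂ) := by
    rw [← hf]; push_cast; ring
  have hBsq : B ^ 2 = Mᴴ * M := by
    rw [hB, sq, Matrix.smul_mul, Matrix.mul_smul, smul_smul]
    rw [show (M * M) * (M * M) = ((M * M) * M) * M from (Matrix.mul_assoc (M*M) M M).symm]
    rw [hM3, hscal, Matrix.smul_mul, smul_smul, hMh]
    rw [show ((lam⁻¹ : ℝ) : ℂ) * ((lam⁻¹ : ℝ) : ℂ) * (((1 - 2*f : ℝ)) : ℂ) = (((lam⁻¹ * lam⁻¹ * (1 - 2*f) : ℝ)) : ℂ) by push_cast; ring]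
    rw [show lam⁻¹ * lam⁻¹ * (1 - 2*f) = 1 by
      rw [← hlam2, sq]; field_simp]
    rw [Complex.ofReal_one, one_smul]
  have hsqrt : B = CFC.sqrt (Mᴴ * M) :=
    (CFC.sqrt_unique (by rw [← sq]; exact hBsq) hB_psd.nonneg).symm
  -- traces
  have trP : P.trace = (1/2 : ℂ) := by
    rw [hP, Matrix.trace, ← key1]
    congr 1; ext p
    simp [Matrix.diag, vecMulVec_apply, hsv, mul_comm]
  have trQ : Q.trace = 1 := by
    rw [hQ, Matrix.trace, ← key2]
    congr 1; ext p
    simp [Matrix.diag, vecMulVec_apply, hsT, mul_comm]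
  have trR : R.trace = s := by
    rw [hR, Matrix.trace, hs]
    congr 1; ext p
    simp [Matrix.diag, vecMulVec_apply, hsT, mul_comm]
  have trR' : R'.trace = (starRingEnd ℂ) s := by
    rw [hR', Matrix.trace, hs, map_sum]
    congr 1; ext p
    simp only [Matrix.diag_apply, vecMulVec_apply, hsv, _root_.map_mul, Complex.star_def,
      Complex.conj_conj]
    try ring
  have trM2 : (M * M).trace = (((2 - 4*f : ℝ)) : ℂ) := by
    have h9 : (M * M).trace = 2 - 4 * (s * (starRingEnd ℂ) s) := by
      rw [hM2]
      simp only [Matrix.trace_sub, Matrix.trace_add, Matrix.trace_smul, trP, trQ, trR, trR',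
        smul_eq_mul]
      ring
    rw [h9, ← hf]
    push_cast
    ring
  have htrB : B.trace = (((2 * lam : ℝ)) : ℂ) := by
    rw [hB, Matrix.trace_smul, trM2, smul_eq_mul]
    rw [show ((lam⁻¹ : ℝ) : ℂ) * (((2 - 4*f : ℝ)) : ℂ) = (((lam⁻¹ * (2 - 4*f) : ℝ)) : ℂ) by push_cast; ring]
    congr 1
    have h8 : 2 - 4*f = 2 * lam^2 := by rw [hlam2]; ring
    rw [h8, pow_two]
    field_simp
  rw [traceNorm_eq_cfc, ← hsqrt, htrB, Complex.ofReal_re]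

/-- for the state of Section IIC's example, the post-measurement
(sub-normalized) vector `(I⊗E₀|₀)|ψ⟩`, after any unitary `U` on the provider's
systems and ancillae, has squared overlap with the target `|A⟩|00⟩` (normalising by
`‖(I⊗E₀|₀)|ψ⟩‖² = 1/2`) at most `1 − ε`; hence the trace distance of the normalized
post-measurement state to the target is at least `√ε`. The action of `U` on the two
orthonormal provider vectors is encoded by the arbitrary orthonormal pair `w0, w1`,
and the provider's space after `U` is factorised as `ℂ²(= H'_P) × rest`. -/
theorem stmt17 {r : ℕ} (ε : ℝ) (h0 : 0 ≤ ε) (h1 : ε ≤ 1/2)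
    (w0 w1 : EuclideanSpace ℂ (Fin 2 × Fin r)) (hw : Orthonormal ℂ ![w0, w1])
    (A : EuclideanSpace ℂ (Fin r)) (hA : ‖A‖ = 1)
    (v : EuclideanSpace ℂ (Fin 2 × (Fin 2 × Fin r)))
    (hv : v = toEuc (fun p =>
      (1/Real.sqrt 2 : ℂ) * (if p.1 = 0 then (Real.sqrt (1 - ε) : ℂ) * w0 p.2
        else (Real.sqrt ε : ℂ) * w1 p.2)))
    (T : EuclideanSpace ℂ (Fin 2 × (Fin 2 × Fin r)))
    (hT : T = toEuc (fun p => if p.1 = 0 ∧ p.2.1 = 0 then A p.2.2 else 0)) :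
    (‖(inner ℂ T v : ℂ)‖) ^ 2 / ‖v‖ ^ 2 ≤ 1 - ε ∧
    (1/2) * traceNorm ((2 : ℂ) • Matrix.vecMulVec (fun p => v p) (fun p => star (v p)) -
        Matrix.vecMulVec (fun p => T p) (fun p => star (T p))) ≥ Real.sqrt ε := by
  have hε1 : (0:ℝ) ≤ 1 - ε := by linarith
  have hw0n : ‖w0‖ = 1 := by simpa using hw.1 0
  have hw1n : ‖w1‖ = 1 := by simpa using hw.1 1
  have hw0s : ∑ q, (starRingEnd ℂ) (w0 q) * w0 q = 1 := by
    rw [sum_conj_mul_self, hw0n]; norm_num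
  have hw1s : ∑ q, (starRingEnd ℂ) (w1 q) * w1 q = 1 := by
    rw [sum_conj_mul_self, hw1n]; norm_num
  have hAs : ∑ k, (starRingEnd ℂ) (A k) * A k = 1 := by
    rw [sum_conj_mul_self, hA]; norm_num
  -- pointwise values
  have hvp : ∀ p : Fin 2 × (Fin 2 × Fin r), v p =
      (1/((Real.sqrt 2 : ℝ) : ℂ)) * (if p.1 = 0 then ((Real.sqrt (1 - ε) : ℝ) : ℂ) * w0 p.2
        else ((Real.sqrt ε : ℝ) : ℂ) * w1 p.2) := by
    intro p; rw [hv]; rfl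
  have hTp : ∀ p : Fin 2 × (Fin 2 × Fin r), T p =
      if p.1 = 0 ∧ p.2.1 = 0 then A p.2.2 else 0 := by
    intro p; rw [hT]; rfl
  -- auxiliary square-root facts
  have h2 : ((Real.sqrt 2 : ℝ) : ℂ) * ((Real.sqrt 2 : ℝ) : ℂ) = 2 := by
    rw [← Complex.ofReal_mul, Real.mul_self_sqrt (by norm_num)]; norm_num
  have hc : (1/((Real.sqrt 2:ℝ):ℂ)) * (1/((Real.sqrt 2:ℝ):ℂ)) = 1/2 := by
    rw [div_mul_div_comm, one_mul, h2]
  have h3 : ((Real.sqrt (1-ε) : ℝ) : ℂ) * ((Real.sqrt (1-ε) : ℝ) : ℂ) = ((1-ε : ℝ) : ℂ) := by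
    rw [← Complex.ofReal_mul, Real.mul_self_sqrt hε1]
  have h4 : ((Real.sqrt ε : ℝ) : ℂ) * ((Real.sqrt ε : ℝ) : ℂ) = ((ε : ℝ) : ℂ) := by
    rw [← Complex.ofReal_mul, Real.mul_self_sqrt h0]
  -- norm of v
  have key1 : ∑ p, (starRingEnd ℂ) (v p) * v p = (1/2 : ℂ) := by
    simp only [hvp]
    rw [Fintype.sum_prod_type, Fin.sum_univ_two]
    simp only [reduceIte, Fin.isValue, one_ne_zero]
    have e0 : ∀ q : Fin 2 × Fin r,
        (starRingEnd ℂ) ((1/((Real.sqrt 2:ℝ):ℂ)) * (((Real.sqrt (1-ε):ℝ):ℂ) * w0 q)) *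
          ((1/((Real.sqrt 2:ℝ):ℂ)) * (((Real.sqrt (1-ε):ℝ):ℂ) * w0 q)) =
        (((1-ε)/2 : ℝ) : ℂ) * ((starRingEnd ℂ) (w0 q) * w0 q) := by
      intro q
      calc _ = ((1/((Real.sqrt 2:ℝ):ℂ)) * (1/((Real.sqrt 2:ℝ):ℂ))) *
            ((((Real.sqrt (1-ε):ℝ):ℂ) * ((Real.sqrt (1-ε):ℝ):ℂ)) *
              ((starRingEnd ℂ) (w0 q) * w0 q)) := by
            simp only [_root_.map_mul, map_div₀, _root_.map_one, Complex.conj_ofReal]; ring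
        _ = _ := by rw [hc, h3]; push_cast; ring
    have e1 : ∀ q : Fin 2 × Fin r,
        (starRingEnd ℂ) ((1/((Real.sqrt 2:ℝ):ℂ)) * (((Real.sqrt ε:ℝ):ℂ) * w1 q)) *
          ((1/((Real.sqrt 2:ℝ):ℂ)) * (((Real.sqrt ε:ℝ):ℂ) * w1 q)) =
        ((ε/2 : ℝ) : ℂ) * ((starRingEnd ℂ) (w1 q) * w1 q) := by
      intro q
      calc _ = ((1/((Real.sqrt 2:ℝ):ℂ)) * (1/((Real.sqrt 2:ℝ):ℂ))) *
            ((((Real.sqrt ε:ℝ):ℂ) * ((Real.sqrt ε:ℝ):ℂ)) *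
              ((starRingEnd ℂ) (w1 q) * w1 q)) := by
            simp only [_root_.map_mul, map_div₀, _root_.map_one, Complex.conj_ofReal]; ring
        _ = _ := by rw [hc, h4]; push_cast; ring
    rw [Finset.sum_congr rfl (fun q _ => e0 q), Finset.sum_congr rfl (fun q _ => e1 q),
      ← Finset.mul_sum, ← Finset.mul_sum, hw0s, hw1s]
    push_cast
    ring
  have keyn : ‖v‖^2 = (1/2 : ℝ) := by
    have hh := sum_conj_mul_self v
    rw [key1] at hh
    have h2' : ((‖v‖^2 : ℝ) : ℂ) = ((1/2 : ℝ) : ℂ) := by push_cast; rw [← hh]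
    exact_mod_cast h2'
  have key2 : ∑ p, (starRingEnd ℂ) (T p) * T p = 1 := by
    simp only [hTp]
    rw [Fintype.sum_prod_type]
    rw [Fin.sum_univ_two]
    simp [Fintype.sum_prod_type, Fin.sum_univ_two, hAs]
  -- the overlap
  set s : ℂ := (inner ℂ T v : ℂ) with hs_def
  have hs_sum : s = ∑ p, (starRingEnd ℂ) (T p) * v p := by
    rw [hs_def]; simp [PiLp.inner_apply, RCLike.inner_apply, mul_comm]
  have key3 : Complex.normSq s ≤ (1-ε)/2 := by
    set u : EuclideanSpace ℂ (Fin r) := toEuc (fun k => w0 ((0 : Fin 2), k)) with hu_def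
    have hu_apply : ∀ k, u k = w0 ((0 : Fin 2), k) := fun k => rfl
    have hun : ‖u‖ ≤ 1 := by
      have hle : ‖u‖^2 ≤ ‖w0‖^2 := by
        rw [EuclideanSpace.norm_eq, EuclideanSpace.norm_eq,
          Real.sq_sqrt (Finset.sum_nonneg fun i _ => sq_nonneg _),
          Real.sq_sqrt (Finset.sum_nonneg fun i _ => sq_nonneg _)]
        rw [Fintype.sum_prod_type, Fin.sum_univ_two]
        have huw : ∑ k, ‖u k‖^2 = ∑ k, ‖w0 ((0:Fin 2), k)‖^2 := by
          simp [hu_apply]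
        rw [huw]
        have h2'' : (0:ℝ) ≤ ∑ k, ‖w0 ((1:Fin 2), k)‖^2 :=
          Finset.sum_nonneg fun i _ => sq_nonneg _
        linarith
      nlinarith [norm_nonneg u, norm_nonneg w0, hw0n]
    have hs_eq : s = ((1/(Real.sqrt 2:ℝ) * Real.sqrt (1-ε) : ℝ) : ℂ) * (inner ℂ A u : ℂ) := by
      rw [hs_sum]
      simp only [hTp, hvp]
      rw [Fintype.sum_prod_type, Fin.sum_univ_two]
      simp only [Fin.isValue, one_ne_zero, false_and, map_zero, zero_mul, Finset.sum_const_zero,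
        add_zero, true_and, reduceIte]
      rw [Fintype.sum_prod_type, Fin.sum_univ_two]
      simp only [Fin.isValue, one_ne_zero, reduceIte, map_zero, zero_mul, Finset.sum_const_zero,
        add_zero]
      rw [show (inner ℂ A u : ℂ) = ∑ k, (starRingEnd ℂ) (A k) * u k by
        simp [PiLp.inner_apply, RCLike.inner_apply, mul_comm]]
      rw [Finset.mul_sum]
      congr 1
      ext k
      rw [hu_apply]
      push_cast
      ring
    have habs : ‖s‖ ≤ 1/(Real.sqrt 2) * Real.sqrt (1-ε) := by
      rw [hs_eq, norm_mul, Complex.norm_real, Real.norm_eq_abs]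
      have h5 : ‖(inner ℂ A u : ℂ)‖ ≤ 1 := by
        calc ‖(inner ℂ A u : ℂ)‖ ≤ ‖A‖ * ‖u‖ := norm_inner_le_norm (𝕜 := ℂ) A u
          _ ≤ 1 := by rw [hA, one_mul]; exact hun
      have h6 : (0:ℝ) ≤ 1/(Real.sqrt 2) * Real.sqrt (1-ε) := by positivity
      calc |1/(Real.sqrt 2) * Real.sqrt (1-ε)| * ‖(inner ℂ A u : ℂ)‖
          = (1/(Real.sqrt 2) * Real.sqrt (1-ε)) * ‖(inner ℂ A u : ℂ)‖ := by
            rw [abs_of_nonneg h6]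
        _ ≤ (1/(Real.sqrt 2) * Real.sqrt (1-ε)) * 1 := mul_le_mul_of_nonneg_left h5 h6
        _ = 1/(Real.sqrt 2) * Real.sqrt (1-ε) := mul_one _
    have hsq : (1/(Real.sqrt 2) * Real.sqrt (1-ε))^2 = (1-ε)/2 := by
      rw [mul_pow, div_pow, one_pow, Real.sq_sqrt (by norm_num : (0:ℝ) ≤ 2),
        Real.sq_sqrt hε1]
      ring
    rw [← Complex.sq_norm]
    calc ‖s‖ ^ 2 ≤ (1/(Real.sqrt 2) * Real.sqrt (1-ε))^2 :=
          pow_le_pow_left₀ (norm_nonneg s) habs 2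
      _ = (1-ε)/2 := hsq
  constructor
  · -- part 1
    rw [keyn, Complex.sq_norm, div_le_iff₀ (by norm_num : (0:ℝ) < 1/2)]
    linarith [key3]
  · -- part 2
    set f : ℝ := Complex.normSq s with hf_def
    have hf : (f:ℂ) = s * (starRingEnd ℂ) s := (Complex.mul_conj s).symm
    have hfle : 2*f ≤ 1 := by linarith [key3]
    have hεle : ε ≤ 1 - 2*f := by linarith [key3]
    have hsqrt_mono : Real.sqrt ε ≤ Real.sqrt (1 - 2*f) := Real.sqrt_le_sqrt hεle
    by_cases hpos : (0:ℝ) < Real.sqrt (1 - 2*f)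
    · have key1' : ∑ p, star (v p) * v p = (1/2:ℂ) := key1
      have key2' : ∑ p, star (T p) * T p = (1:ℂ) := key2
      have hs' : s = ∑ p, star (T p) * v p := hs_sum
      have htn := part2_aux (fun p => v p) (fun p => T p) s key1' key2' hs' f hf hfle hpos
      rw [ge_iff_le, htn]
      linarith
    · have hz : Real.sqrt (1 - 2*f) = 0 :=
        le_antisymm (not_lt.mp hpos) (Real.sqrt_nonneg _)
      have hε0 : Real.sqrt ε = 0 := le_antisymm (hz ▸ hsqrt_mono) (Real.sqrt_nonneg _)
      rw [hε0, ge_iff_le]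
      have htn_nonneg : 0 ≤ traceNorm ((2 : ℂ) •
          Matrix.vecMulVec (fun p => v p) (fun p => star (v p)) -
          Matrix.vecMulVec (fun p => T p) (fun p => star (T p))) :=
        traceNorm_nonneg _
      linarith
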